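/- Let (L_i) for i ≥ 0 be a family of finite sets of lines where each ℓ ∈ L_i has weight w(ℓ) with 2^i ≤ w(ℓ) < 2^{i+1}, and let |L|₁ = Σ_ℓ w(ℓ) and |L|₂² = Σ_ℓ w(ℓ)². Then Σ_i 2^i |L_i|^{2/3} = O(|L|₁^{1/3} |L|₂^{2/3}). -/

import Mathlib

lemma dyadic_key (r x y : ℝ) (hr : 1 < r) (hx : 0 ≤ x) (hy : 0 ≤ y) (N : ℕ) (f : ℕ → ℝ)
    (h1 : ∀ i, i < N → f i ≤ x * r ^ i)
    (h2 : ∀ i, i < N → f i ≤ y * r⁻¹ ^ i) :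
    ∑ i ∈ Finset.range N, f i ≤ (2 * r / (r - 1)) * Real.sqrt (x * y) := by
  classical
  have hr0 : (0:ℝ) < r := lt_trans one_pos hr
  have hr1 : r - 1 > 0 := by linarith
  have hs0 : (0:ℝ) < r⁻¹ := inv_pos.mpr hr0
  have hs1 : r⁻¹ < 1 := inv_lt_one_of_one_lt₀ hr
  have hsq : 0 ≤ Real.sqrt (x * y) := Real.sqrt_nonneg _
  obtain ⟨k, hkN, hlow, hup⟩ :
      ∃ k, k ≤ N ∧ (∀ j, j < k → x * r ^ j ≤ y * r⁻¹ ^ j) ∧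
        (k < N → y * r⁻¹ ^ k < x * r ^ k) := by
    by_cases hE : ∃ i, y * r⁻¹ ^ i < x * r ^ i ∧ i < N
    · refine ⟨Nat.find hE, (Nat.find_spec hE).2.le, ?_, fun _ => (Nat.find_spec hE).1⟩
      intro j hj
      have hjN : j < N := lt_of_lt_of_le hj (Nat.find_spec hE).2.le
      have h := Nat.find_min hE hj
      push_neg at h
      exact le_of_not_gt fun hc => absurd (h hc) (not_le.mpr hjN)
    · push_neg at hE
      exact ⟨N, le_rfl, fun j hj => le_of_not_gt fun hc => absurd (hE j hc) (not_le.mpr hj),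
        fun h => absurd h (lt_irrefl N)⟩
  have hxrk : 0 < k → x * r ^ k ≤ r * Real.sqrt (x * y) := by
    intro hk
    have hl := hlow (k - 1) (Nat.sub_lt hk one_pos)
    have hprod : (x * r ^ (k-1)) * (y * r⁻¹ ^ (k-1)) = x * y := by
      rw [inv_pow, mul_mul_mul_comm, mul_inv_cancel₀ (pow_ne_zero _ hr0.ne'), mul_one]
    have hnn : 0 ≤ x * r ^ (k-1) := mul_nonneg hx (le_of_lt (pow_pos hr0 _))
    have hsqle : x * r ^ (k-1) ≤ Real.sqrt (x * y) := by
      rw [Real.le_sqrt hnn (mul_nonneg hx hy)]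
      nlinarith [hl, hnn]
    have hkk : k = (k-1) + 1 := (Nat.succ_pred_eq_of_pos hk).symm
    rw [hkk, pow_succ]
    nlinarith [hsqle, pow_pos hr0 (k-1)]
  have hysk : k < N → y * r⁻¹ ^ k ≤ Real.sqrt (x * y) := by
    intro hk
    have hu := hup hk
    have hnn : 0 ≤ y * r⁻¹ ^ k := mul_nonneg hy (le_of_lt (pow_pos hs0 _))
    rw [Real.le_sqrt hnn (mul_nonneg hx hy)]
    have hprod : (x * r ^ k) * (y * r⁻¹ ^ k) = x * y := by rw [inv_pow, mul_mul_mul_comm, mul_inv_cancel₀ (pow_ne_zero _ hr0.ne'), mul_one]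
    nlinarith [hu, hnn]
  rw [← Finset.sum_range_add_sum_Ico f hkN]
  have part1 : ∑ i ∈ Finset.range k, f i ≤ (r / (r - 1)) * Real.sqrt (x * y) := by
    rcases Nat.eq_zero_or_pos k with hk | hk
    · simp only [hk, Finset.range_zero, Finset.sum_empty]
      positivity
    calc ∑ i ∈ Finset.range k, f i ≤ ∑ i ∈ Finset.range k, x * r ^ i :=
          Finset.sum_le_sum fun i hi => h1 i (lt_of_lt_of_le (Finset.mem_range.mp hi) hkN)
      _ = x * ((r ^ k - 1) / (r - 1)) := by
          rw [← Finset.mul_sum, geom_sum_eq (ne_of_gt hr)]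
      _ ≤ (x * r ^ k) / (r - 1) := by
          rw [mul_div_assoc]
          gcongr
          nlinarith [pow_pos hr0 k]
      _ ≤ (r * Real.sqrt (x * y)) / (r - 1) := by
          rw [div_le_div_iff₀ hr1 hr1]; nlinarith [hxrk hk]
      _ = (r / (r - 1)) * Real.sqrt (x * y) := by ring
  have part2 : ∑ i ∈ Finset.Ico k N, f i ≤ (r / (r - 1)) * Real.sqrt (x * y) := by
    rcases Nat.lt_or_ge k N with hk | hk
    swap
    · rw [Finset.Ico_eq_empty (not_lt.mpr hk), Finset.sum_empty]
      positivity
    calc ∑ i ∈ Finset.Ico k N, f i ≤ ∑ i ∈ Finset.Ico k N, y * r⁻¹ ^ i :=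
          Finset.sum_le_sum fun i hi => h2 i (Finset.mem_Ico.mp hi).2
      _ = y * ((r⁻¹ ^ N - r⁻¹ ^ k) / (r⁻¹ - 1)) := by
          rw [← Finset.mul_sum, geom_sum_Ico (ne_of_lt hs1) hkN]
      _ = y * ((r⁻¹ ^ k - r⁻¹ ^ N) / (1 - r⁻¹)) := by
          congr 1
          rw [div_eq_div_iff (by linarith) (by linarith)]; ring
      _ ≤ (y * r⁻¹ ^ k) / (1 - r⁻¹) := by
          rw [mul_div_assoc]
          gcongr
          nlinarith [pow_pos hs0 N]
      _ ≤ Real.sqrt (x * y) / (1 - r⁻¹) := by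
          have h1s : (0:ℝ) < 1 - r⁻¹ := by linarith
          rw [div_le_div_iff₀ h1s h1s]; nlinarith [hysk hk]
      _ = (r / (r - 1)) * Real.sqrt (x * y) := by
          have h1s : 1 - r⁻¹ = (r - 1) / r := by field_simp
          rw [h1s, div_div_eq_mul_div]; ring
  have : 2 * r / (r - 1) * Real.sqrt (x * y)
      = r / (r - 1) * Real.sqrt (x * y) + r / (r - 1) * Real.sqrt (x * y) := by ring
  linarith [part1, part2]

lemma rpow_help1 (b c M : ℝ) (hb : 0 < b) (hc : 0 ≤ c) (h : b * c ≤ M) :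
    b * c ^ ((2:ℝ)/3) ≤ M ^ ((2:ℝ)/3) * b ^ ((1:ℝ)/3) := by
  have h1 : (b * c) ^ ((2:ℝ)/3) ≤ M ^ ((2:ℝ)/3) :=
    Real.rpow_le_rpow (mul_nonneg hb.le hc) h (by norm_num)
  rw [Real.mul_rpow hb.le hc] at h1
  have hb23 : b ^ ((2:ℝ)/3) * b ^ ((1:ℝ)/3) = b := by
    rw [← Real.rpow_add hb]; norm_num
  calc b * c ^ ((2:ℝ)/3) = (b ^ ((2:ℝ)/3) * c ^ ((2:ℝ)/3)) * b ^ ((1:ℝ)/3) := by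
        rw [mul_comm (b ^ ((2:ℝ)/3)) (c ^ ((2:ℝ)/3)), mul_assoc, hb23]; ring
    _ ≤ M ^ ((2:ℝ)/3) * b ^ ((1:ℝ)/3) := by gcongr

lemma rpow_help2 (b c M : ℝ) (hb : 0 < b) (hc : 0 ≤ c) (h : b ^ 2 * c ≤ M) :
    b * c ^ ((2:ℝ)/3) ≤ M ^ ((2:ℝ)/3) * (b ^ ((1:ℝ)/3))⁻¹ := by
  have hb2 : (0:ℝ) ≤ b ^ 2 := sq_nonneg b
  have h1 : (b ^ 2 * c) ^ ((2:ℝ)/3) ≤ M ^ ((2:ℝ)/3) :=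
    Real.rpow_le_rpow (mul_nonneg hb2 hc) h (by norm_num)
  rw [Real.mul_rpow hb2 hc] at h1
  have hcast : ((2:ℕ):ℝ) * ((2:ℝ)/3) = 1 + (1:ℝ)/3 := by norm_num
  have hkey : (b ^ 2) ^ ((2:ℝ)/3) = b * b ^ ((1:ℝ)/3) := by
    rw [← Real.rpow_natCast b 2, ← Real.rpow_mul hb.le, hcast, Real.rpow_add hb, Real.rpow_one]
  have hb13 : (0:ℝ) < b ^ ((1:ℝ)/3) := Real.rpow_pos_of_pos hb _
  rw [hkey] at h1
  rw [← div_eq_mul_inv, le_div_iff₀ hb13]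
  nlinarith [h1]

/-- Dyadic summation estimate: if each line in `L i` has weight in `[2^i, 2^{i+1})`, then
`Σ_i 2^i |L_i|^{2/3} = O(|L|₁^{1/3} |L|₂^{2/3})`. -/
theorem dyadic_weight_sum_bound :
    ∃ C > (0:ℝ), ∀ (α : Type) (L : ℕ → Finset α) (w : α → ℝ) (N : ℕ),
      (∀ i, ∀ ℓ ∈ L i, (2:ℝ) ^ i ≤ w ℓ ∧ w ℓ < 2 ^ (i + 1)) →
      (∀ i, N ≤ i → L i = ∅) →
      ∑ i ∈ Finset.range N, (2:ℝ) ^ i * ((L i).card : ℝ) ^ ((2:ℝ)/3) ≤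
        C * (∑ i ∈ Finset.range N, ∑ ℓ ∈ L i, w ℓ) ^ ((1:ℝ)/3) *
          (∑ i ∈ Finset.range N, ∑ ℓ ∈ L i, (w ℓ) ^ 2) ^ ((1:ℝ)/3) := by
  set r : ℝ := (2:ℝ) ^ ((1:ℝ)/3) with hr_def
  have hr : 1 < r := by
    rw [hr_def]
    exact (Real.one_lt_rpow_iff_of_pos two_pos).mpr (Or.inl ⟨one_lt_two, by norm_num⟩)
  have hr1 : 0 < r - 1 := by linarith
  refine ⟨2 * r / (r - 1), by positivity, ?_⟩
  intro α L w N hw _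
  set A : ℝ := ∑ i ∈ Finset.range N, ∑ ℓ ∈ L i, w ℓ with hA_def
  set B : ℝ := ∑ i ∈ Finset.range N, ∑ ℓ ∈ L i, (w ℓ) ^ 2 with hB_def
  have hinner : ∀ j, 0 ≤ ∑ ℓ ∈ L j, w ℓ := fun j =>
    Finset.sum_nonneg fun ℓ hℓ => le_trans (by positivity) (hw j ℓ hℓ).1
  have hA0 : 0 ≤ A := Finset.sum_nonneg fun j _ => hinner j
  have hB0 : 0 ≤ B := Finset.sum_nonneg fun j _ =>
    Finset.sum_nonneg fun ℓ _ => sq_nonneg _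
  -- per-scale bounds
  have hAi : ∀ i, i < N → (2:ℝ) ^ i * ((L i).card : ℝ) ≤ A := by
    intro i hi
    have h1 : (2:ℝ) ^ i * ((L i).card : ℝ) ≤ ∑ ℓ ∈ L i, w ℓ := by
      rw [mul_comm]
      calc ((L i).card : ℝ) * (2:ℝ) ^ i = ∑ _ℓ ∈ L i, (2:ℝ) ^ i := by
            rw [Finset.sum_const, nsmul_eq_mul]
        _ ≤ ∑ ℓ ∈ L i, w ℓ := Finset.sum_le_sum fun ℓ hℓ => (hw i ℓ hℓ).1
    exact le_trans h1 (Finset.single_le_sum (fun j _ => hinner j) (Finset.mem_range.mpr hi))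
  have hBi : ∀ i, i < N → ((2:ℝ) ^ i) ^ 2 * ((L i).card : ℝ) ≤ B := by
    intro i hi
    have h1 : ((2:ℝ) ^ i) ^ 2 * ((L i).card : ℝ) ≤ ∑ ℓ ∈ L i, (w ℓ) ^ 2 := by
      rw [mul_comm]
      calc ((L i).card : ℝ) * ((2:ℝ) ^ i) ^ 2 = ∑ _ℓ ∈ L i, ((2:ℝ) ^ i) ^ 2 := by
            rw [Finset.sum_const, nsmul_eq_mul]
        _ ≤ ∑ ℓ ∈ L i, (w ℓ) ^ 2 := Finset.sum_le_sum fun ℓ hℓ => by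
            have := (hw i ℓ hℓ).1
            have h2i : (0:ℝ) ≤ 2 ^ i := by positivity
            nlinarith
    exact le_trans h1 (Finset.single_le_sum (f := fun j => ∑ ℓ ∈ L j, (w ℓ) ^ 2)
      (fun j _ => Finset.sum_nonneg fun ℓ _ => sq_nonneg _) (Finset.mem_range.mpr hi))
  -- 2^i raised to 1/3 equals r^i
  have hpow : ∀ i : ℕ, ((2:ℝ) ^ i) ^ ((1:ℝ)/3) = r ^ i := by
    intro i
    rw [hr_def, ← Real.rpow_natCast (2:ℝ) i, ← Real.rpow_mul (by norm_num : (0:ℝ) ≤ 2),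
      mul_comm, Real.rpow_mul (by norm_num : (0:ℝ) ≤ 2), Real.rpow_natCast]
  have key := dyadic_key r (A ^ ((2:ℝ)/3)) (B ^ ((2:ℝ)/3)) hr
    (Real.rpow_nonneg hA0 _) (Real.rpow_nonneg hB0 _) N
    (fun i => (2:ℝ) ^ i * ((L i).card : ℝ) ^ ((2:ℝ)/3))
    (fun i hi => by
      have := rpow_help1 ((2:ℝ)^i) ((L i).card : ℝ) A (by positivity) (by positivity) (hAi i hi)
      rwa [hpow i] at this)
    (fun i hi => by
      have := rpow_help2 ((2:ℝ)^i) ((L i).card : ℝ) B (by positivity) (by positivity) (hBi i hi)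
      rwa [hpow i, ← inv_pow] at this)
  refine le_trans key (le_of_eq ?_)
  have hs : Real.sqrt (A ^ ((2:ℝ)/3) * B ^ ((2:ℝ)/3)) = A ^ ((1:ℝ)/3) * B ^ ((1:ℝ)/3) := by
    rw [Real.sqrt_eq_rpow,
      Real.mul_rpow (Real.rpow_nonneg hA0 _) (Real.rpow_nonneg hB0 _),
      ← Real.rpow_mul hA0, ← Real.rpow_mul hB0]
    norm_num
  rw [hs]; ring
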